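/- Let p and q be coprime positive integers. Let f ∈ ℂ⟦x,y⟧ be nonzero with (p,q)-weighted order ν, i.e., f_{i,j} = 0 whenever p·i + q·j < ν and f_{i,j} ≠ 0 for some (i,j) with p·i + q·j = ν. Assume p·q divides ν. Then for every natural number n ≥ ν/(p·q), the quotient of ℂ⟦x,y⟧ by the ideal J_{p,q,n} + ⟨f⟩ is a finite-dimensional ℂ-vector space of dimension n·ν − ν·(ν − p − q + 1)/(2·p·q); equivalently, 2·p·q · dim_ℂ ( ℂ⟦x,y⟧/(J_{p,q,n} + ⟨f⟩) ) = 2·p·q·n·ν − ν·(ν − p − q + 1). -/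

import Mathlib

/-- The ideal `J_{p,q,n}` of `ℂ⟦x,y⟧` generated by the monomials `x^i y^j` with
`p·i + q·j ≥ p·q·n`; this is the `n`-th power of the integral closure `I_{p,q}`
of `⟨x^q, y^p⟩`. -/
noncomputable def Jpqn (p q n : ℕ) : Ideal (MvPowerSeries (Fin 2) ℂ) :=
  Ideal.span {F | ∃ i j : ℕ, p * q * n ≤ p * i + q * j ∧
    F = (MvPowerSeries.X 0 : MvPowerSeries (Fin 2) ℂ) ^ i * (MvPowerSeries.X 1) ^ j}


open MvPowerSeries Finsupp

noncomputable section

abbrev Rps := MvPowerSeries (Fin 2) ℂ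

/-- weight of an exponent -/
def wt (p q : ℕ) (d : Fin 2 →₀ ℕ) : ℕ := p * d 0 + q * d 1

lemma wt_add (p q : ℕ) (a b : Fin 2 →₀ ℕ) : wt p q (a + b) = wt p q a + wt p q b := by
  simp [wt, Finsupp.add_apply]; ring

lemma finsupp_fin2_eq (d : Fin 2 →₀ ℕ) :
    d = Finsupp.single 0 (d 0) + Finsupp.single 1 (d 1) := by
  ext i; fin_cases i <;> simp [Finsupp.single_apply]

lemma wt_single (p q i j : ℕ) :
    wt p q (Finsupp.single (0 : Fin 2) i + Finsupp.single 1 j) = p * i + q * j := by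
  simp [wt, Finsupp.single_apply]

/-- the ideal of series all of whose low-weight coefficients vanish -/
def KId (p q M : ℕ) : Ideal Rps where
  carrier := {F | ∀ d, wt p q d < M → MvPowerSeries.coeff (R := ℂ) d F = 0}
  zero_mem' := by intro d _; simp
  add_mem' := by intro F G hF hG d hd; simp [map_add, hF d hd, hG d hd]
  smul_mem' := by
    intro c F hF d hd
    rw [smul_eq_mul]
    rw [MvPowerSeries.coeff_mul]
    apply Finset.sum_eq_zero
    rintro ⟨a, b⟩ hab
    rw [Finset.HasAntidiagonal.mem_antidiagonal] at hab
    have hb : wt p q b < M := by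
      have : wt p q a + wt p q b = wt p q d := by rw [← wt_add, hab]
      omega
    simp [hF b hb]

lemma mem_KId {p q M : ℕ} {F : Rps} :
    F ∈ KId p q M ↔ ∀ d, wt p q d < M → MvPowerSeries.coeff (R := ℂ) d F = 0 := Iff.rfl

lemma Jpqn_le_KId (p q n : ℕ) : Jpqn p q n ≤ KId p q (p * q * n) := by
  rw [Jpqn, Ideal.span_le]
  rintro F ⟨i, j, hij, rfl⟩
  intro d hd
  rw [MvPowerSeries.X_pow_eq, MvPowerSeries.X_pow_eq, MvPowerSeries.monomial_mul_monomial,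
    mul_one, MvPowerSeries.coeff_monomial]
  rw [if_neg]
  rintro rfl
  rw [wt_single] at hd
  omega

section conv
variable {p q n : ℕ} (hp : 0 < p) (hq : 0 < q)

/-- x-exponent of the `t`-th corner generator -/
def aexp (p q n t : ℕ) : ℕ := (p * q * n - q * t) ⌈/⌉ p

def mexp (p q n t : ℕ) : Fin 2 →₀ ℕ :=
  Finsupp.single 0 (aexp p q n t) + Finsupp.single 1 t

include hp in
lemma wt_mexp (ht : t ≤ p * n) : p * q * n ≤ wt p q (mexp p q n t) := by
  rw [mexp, wt_single]
  have h1 : p * q * n - q * t ≤ p * aexp p q n t := by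
    have := le_smul_ceilDiv (b := p * q * n - q * t) hp
    simpa [smul_eq_mul, aexp] using this
  have h2 : q * t ≤ p * q * n := by
    calc q * t ≤ q * (p * n) := Nat.mul_le_mul_left q ht
    _ = p * q * n := by ring
  omega

include hp in
lemma aexp_le {d : Fin 2 →₀ ℕ} (hd : p * q * n ≤ wt p q d) (ht : d 1 < p * n) :
    aexp p q n (d 1) ≤ d 0 := by
  rw [aexp, ceilDiv_le_iff_le_smul hp, smul_eq_mul]
  rw [wt] at hd
  omega

include hp in
lemma mexp_le {d : Fin 2 →₀ ℕ} (hd : p * q * n ≤ wt p q d) :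
    mexp p q n (min (d 1) (p * n)) ≤ d := by
  rw [Finsupp.le_def]
  intro i
  fin_cases i
  · show (mexp p q n _) 0 ≤ d 0
    rw [mexp, Finsupp.add_apply]
    simp only [Finsupp.single_apply]
    norm_num
    rcases lt_or_ge (d 1) (p * n) with h | h
    · rw [min_eq_left h.le]; exact aexp_le hp hd h
    · rw [min_eq_right h]
      rw [aexp]
      have : p * q * n - q * (p * n) = 0 := by
        have : q * (p * n) = p * q * n := by ring
        omega
      rw [this]
      simp
  · show (mexp p q n _) 1 ≤ d 1
    rw [mexp, Finsupp.add_apply]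
    simp [Finsupp.single_apply]

/-- the cofactor series -/
def Gser (p q n : ℕ) (F : Rps) (t : ℕ) : Rps := fun e =>
  if min ((e + mexp p q n t) 1) (p * n) = t
  then MvPowerSeries.coeff (R := ℂ) (e + mexp p q n t) F else 0

lemma coeff_Gser (F : Rps) (t : ℕ) (e : Fin 2 →₀ ℕ) :
    MvPowerSeries.coeff (R := ℂ) e (Gser p q n F t) =
      (if min ((e + mexp p q n t) 1) (p * n) = t
       then MvPowerSeries.coeff (R := ℂ) (e + mexp p q n t) F else 0) := rfl

include hp hq in
lemma KId_le_Jpqn (F : Rps) (hF : ∀ d, wt p q d < p * q * n → MvPowerSeries.coeff (R := ℂ) d F = 0) :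
    F ∈ Jpqn p q n := by
  have key : F = ∑ t ∈ Finset.range (p * n + 1),
      Gser p q n F t * MvPowerSeries.monomial (R := ℂ) (mexp p q n t) 1 := by
    ext d
    rw [map_sum]
    by_cases hd0 : MvPowerSeries.coeff (R := ℂ) d F = 0
    · rw [hd0]
      apply (Finset.sum_eq_zero _).symm
      intro t _
      rw [MvPowerSeries.coeff_mul_monomial]
      split_ifs with h
      · rw [mul_one, coeff_Gser, tsub_add_cancel_of_le h]
        split_ifs with h2
        · exact hd0
        · rfl
      · rfl
    · have hdw : p * q * n ≤ wt p q d := by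
        by_contra h
        exact hd0 (hF d (by omega))
      set t0 := min (d 1) (p * n) with ht0
      have ht0mem : t0 ∈ Finset.range (p * n + 1) := by
        simp only [Finset.mem_range, ht0]; omega
      rw [Finset.sum_eq_single t0]
      · rw [MvPowerSeries.coeff_mul_monomial, if_pos (mexp_le hp hdw),
          mul_one, coeff_Gser, tsub_add_cancel_of_le (mexp_le hp hdw), if_pos rfl]
      · intro t _ hne
        rw [MvPowerSeries.coeff_mul_monomial]
        split_ifs with h
        · rw [mul_one, coeff_Gser, tsub_add_cancel_of_le h, if_neg (by rw [← ht0]; exact fun hc => hne hc.symm)]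
        · rfl
      · intro h; exact absurd ht0mem h
  rw [key]
  apply Ideal.sum_mem
  intro t ht
  rw [Finset.mem_range] at ht
  apply Ideal.mul_mem_left
  apply Ideal.subset_span
  refine ⟨aexp p q n t, t, ?_, ?_⟩
  · have := wt_mexp (p := p) (q := q) (n := n) hp (t := t) (by omega)
    rw [mexp, wt_single] at this
    exact this
  · rw [MvPowerSeries.X_pow_eq, MvPowerSeries.X_pow_eq, MvPowerSeries.monomial_mul_monomial,
      mul_one, mexp]
end conv

def Tset (p q k : ℕ) : Finset (ℕ × ℕ) :=
  (Finset.range (q*k) ×ˢ Finset.range (p*k)).filter fun ij => p*ij.1 + q*ij.2 < p*q*k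

lemma mem_Tset {p q k : ℕ} {ij : ℕ × ℕ} (hp : 0 < p) (hq : 0 < q) :
    ij ∈ Tset p q k ↔ p*ij.1 + q*ij.2 < p*q*k := by
  rw [Tset, Finset.mem_filter, Finset.mem_product, Finset.mem_range, Finset.mem_range]
  constructor
  · tauto
  · intro h
    have e1 : p*(q*k) = p*q*k := by ring
    have e2 : q*(p*k) = p*q*k := by ring
    refine ⟨⟨?_, ?_⟩, h⟩
    · exact lt_of_mul_lt_mul_left (a := p) (by omega) (Nat.zero_le p)
    · exact lt_of_mul_lt_mul_left (a := q) (by omega) (Nat.zero_le q)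

def Aset (p q k : ℕ) : Finset (ℕ × ℕ) :=
  (Tset p q k).filter fun ij => p*q*k < p*ij.1 + q*ij.2 + p + q

lemma exists_rep {p q : ℕ} (hq : 0 < q) (hpq : Nat.Coprime p q) (s : ℕ) :
    ∃ i₁ : ℕ, i₁ < q ∧ ∃ w : ℤ, (s:ℤ) = p*i₁ + q*w := by
  obtain ⟨x, y, hxy⟩ : IsCoprime (p : ℤ) (q : ℤ) := Int.isCoprime_iff_gcd_eq_one.mpr (by
    simpa [Int.gcd] using hpq)
  have hq0 : (q:ℤ) ≠ 0 := by exact_mod_cast hq.ne'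
  have hqpos : (0:ℤ) < q := by exact_mod_cast hq
  have hX0 : 0 ≤ (x * s) % q := Int.emod_nonneg _ hq0
  have hXq : (x * s) % q < q := Int.emod_lt_of_pos _ hqpos
  refine ⟨((x * s) % q).toNat, ?_, y*s + p*((x*s)/q), ?_⟩
  · omega
  · have hdm : (q:ℤ) * ((x*s) / q) + (x*s) % q = x*s := Int.mul_ediv_add_emod _ _
    have hXrw : (x*↑s) % ↑q = x*↑s - ↑q*((x*↑s)/↑q) := by linarith
    rw [Int.toNat_of_nonneg hX0, hXrw]
    linear_combination (-(s:ℤ)) * hxy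

set_option maxHeartbeats 1000000 in
lemma Aset_card (p q k : ℕ) (hp : 0 < p) (hq : 0 < q) (hpq : Nat.Coprime p q) :
    (Aset p q k).card + k = (p + q) * k := by
  have key : (Aset p q k).card = ((Finset.range (p+q-1)) ×ˢ Finset.range k).card := by
    apply Finset.card_bij (fun a _ => (p*a.1 + q*a.2 + p + q - 1 - p*q*k, a.1 / q))
    · -- maps into target
      intro a ha
      rw [Aset, Finset.mem_filter, mem_Tset hp hq] at ha
      obtain ⟨hT, hA⟩ := ha
      have e1 : p*(q*k) = p*q*k := by ring
      have hik : a.1 < q * k := lt_of_mul_lt_mul_left (a := p) (by omega) (Nat.zero_le p)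
      rw [Finset.mem_product, Finset.mem_range, Finset.mem_range]
      refine ⟨by omega, ?_⟩
      show a.1 / q < k
      rw [Nat.div_lt_iff_lt_mul hq]
      have e2 : k * q = q * k := by ring
      omega
    · -- injective
      have key : ∀ a1 b1 a2 b2 : ℕ, p*a1 + q*b1 = p*a2 + q*b2 → a1 / q = a2 / q →
          a1 ≤ a2 → a1 = a2 := by
        intro a1 b1 a2 b2 h hdiv hle
        have hpa : p * a1 ≤ p * a2 := Nat.mul_le_mul_left p hle
        have hb2 : b2 ≤ b1 := by
          by_contra hcon
          push_neg at hcon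
          have : q * b1 < q * b2 := (Nat.mul_lt_mul_left hq).mpr hcon
          omega
        obtain ⟨u, hu⟩ : ∃ u, a2 = a1 + u := ⟨a2 - a1, by omega⟩
        obtain ⟨v, hv⟩ : ∃ v, b1 = b2 + v := ⟨b1 - b2, by omega⟩
        have hpu : p * a2 = p * a1 + p * u := by rw [hu]; ring
        have hqv : q * b1 = q * b2 + q * v := by rw [hv]; ring
        have hdq : q ∣ p * u := ⟨v, by omega⟩
        obtain ⟨t, ht⟩ := (Nat.Coprime.dvd_of_dvd_mul_left hpq.symm hdq)
        have hdt : (a1 + q * t) / q = a1 / q + t := Nat.add_mul_div_left a1 t hq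
        rw [hu, ht, hdt] at hdiv
        have ht0 : t = 0 := by
          generalize a1 / q = D at hdiv
          omega
        rw [ht0, mul_zero] at ht
        omega
      intro a ha b hb hij
      rw [Aset, Finset.mem_filter, mem_Tset hp hq] at ha hb
      obtain ⟨hT1, hA1⟩ := ha; obtain ⟨hT2, hA2⟩ := hb
      rw [Prod.mk.injEq] at hij
      obtain ⟨hr, hc⟩ := hij
      have hs : p*a.1 + q*a.2 = p*b.1 + q*b.2 := by omega
      have hieq : a.1 = b.1 := by
        rcases le_total a.1 b.1 with hle | hle
        · exact key a.1 a.2 b.1 b.2 hs hc hle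
        · exact (key b.1 b.2 a.1 a.2 hs.symm hc.symm hle).symm
      rw [hieq] at hs
      have hjeq : a.2 = b.2 := Nat.eq_of_mul_eq_mul_left hq (show q*a.2 = q*b.2 by omega)
      exact Prod.ext hieq hjeq
    · -- surjective
      intro rc hrc
      rw [Finset.mem_product, Finset.mem_range, Finset.mem_range] at hrc
      obtain ⟨hr, hc⟩ := hrc
      have hk : 0 < k := by omega
      have hpq1 : p + q ≤ p * q + 1 := by nlinarith
      have hpqk : p * q ≤ p*q*k := by nlinarith
      obtain ⟨s, hs1, hs2, hsr⟩ : ∃ s : ℕ, p*q*k < s + p + q ∧ s < p*q*k ∧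
          s + p + q - 1 - p*q*k = rc.1 := ⟨p*q*k - (p+q-1) + rc.1, by omega, by omega, by omega⟩
      obtain ⟨i₁, hi₁, w, hw⟩ := exists_rep hq hpq s
      have h5 : (s:ℤ) - p*i₁ - p*q*(rc.2) = q * (w - p*rc.2) := by linear_combination hw
      have hjz0 : 0 ≤ w - p*rc.2 := by
        have hi₁' : (i₁:ℤ) + 1 ≤ q := by exact_mod_cast hi₁
        have hc' : ((rc.2 : ℕ):ℤ) + 1 ≤ (k:ℤ) := by exact_mod_cast hc
        have hp' : (0:ℤ) ≤ p := by positivity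
        have hpq' : (0:ℤ) ≤ (p:ℤ)*q := by positivity
        have h1 : (p:ℤ) * i₁ + p ≤ p * q := by nlinarith
        have h2 : (p:ℤ)*q*rc.2 + p*q ≤ p*q*k := by nlinarith
        have h3 : (p:ℤ)*q*k < s + p + q := by exact_mod_cast hs1
        have h4 : (0:ℤ) < q := by exact_mod_cast hq
        nlinarith [h5]
      obtain ⟨j, hj⟩ : ∃ j : ℕ, (j:ℤ) = w - p*rc.2 := ⟨(w - p*rc.2).toNat,
        Int.toNat_of_nonneg hjz0⟩
      have hrep : p*(i₁ + q*rc.2) + q*j = s := by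
        have : ((p*(i₁ + q*rc.2) + q*j : ℕ) : ℤ) = (s:ℤ) := by push_cast [hj]; linarith [h5]
        exact_mod_cast this
      refine ⟨(i₁ + q*rc.2, j), ?_, ?_⟩
      · rw [Aset, Finset.mem_filter, mem_Tset hp hq]
        refine ⟨?_, ?_⟩
        · show p*(i₁ + q*rc.2) + q*j < p*q*k
          omega
        · show p*q*k < p*(i₁ + q*rc.2) + q*j + p + q
          omega
      · have hdivq : (i₁ + q*rc.2) / q = rc.2 := by
          rw [Nat.add_mul_div_left i₁ rc.2 hq, Nat.div_eq_of_lt hi₁, zero_add]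
        rw [Prod.mk.injEq]
        refine ⟨?_, ?_⟩
        · show p*(i₁ + q*rc.2) + q*j + p + q - 1 - p*q*k = rc.1
          omega
        · show (i₁ + q*rc.2) / q = rc.2
          exact hdivq
  rw [key, Finset.card_product, Finset.card_range, Finset.card_range]
  have h1 : 1 ≤ p + q := by omega
  have h2 : (p+q-1) * k + k = ((p+q-1)+1)*k := by ring
  rw [h2]
  congr 1
  omega

set_option maxHeartbeats 1000000 in
lemma Tset_card (p q k : ℕ) (hp : 0 < p) (hq : 0 < q) (hpq : Nat.Coprime p q) :
    2 * (Tset p q k).card + k = p*q*k*k + (p+q)*k := by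
  classical
  have cardRect : (Finset.range (q*k) ×ˢ Finset.range (p*k)).card = q*k*(p*k) := by
    rw [Finset.card_product, Finset.card_range, Finset.card_range]
  have split1 : (Tset p q k).card + ((Finset.range (q*k) ×ˢ Finset.range (p*k)).filter
        fun ij => ¬(p*ij.1 + q*ij.2 < p*q*k)).card
      = (Finset.range (q*k) ×ˢ Finset.range (p*k)).card := by
    rw [Tset]
    exact Finset.card_filter_add_card_filter_not _
  have split2 : (Aset p q k).card
      + ((Tset p q k).filter fun ij => ¬(p*q*k < p*ij.1 + q*ij.2 + p + q)).card
      = (Tset p q k).card := by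
    rw [Aset]
    exact Finset.card_filter_add_card_filter_not _
  have bij : (((Finset.range (q*k) ×ˢ Finset.range (p*k)).filter
        fun ij => ¬(p*ij.1 + q*ij.2 < p*q*k))).card
      = ((Tset p q k).filter fun ij => ¬(p*q*k < p*ij.1 + q*ij.2 + p + q)).card := by
    apply Finset.card_bij' (fun a _ => (q*k-1-a.1, p*k-1-a.2))
      (fun a _ => (q*k-1-a.1, p*k-1-a.2))
    · intro a ha
      rw [Finset.mem_filter, Finset.mem_product, Finset.mem_range, Finset.mem_range] at ha
      obtain ⟨⟨hi, hj⟩, hs⟩ := ha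
      push_neg at hs
      have e1 : p*a.1 + p*(q*k-1-a.1) + p = p*(q*k) := by
        have h : a.1 + (q*k-1-a.1) + 1 = q*k := by omega
        calc p*a.1 + p*(q*k-1-a.1) + p = p*(a.1 + (q*k-1-a.1) + 1) := by ring
        _ = p*(q*k) := by rw [h]
      have e2 : q*a.2 + q*(p*k-1-a.2) + q = q*(p*k) := by
        have h : a.2 + (p*k-1-a.2) + 1 = p*k := by omega
        calc q*a.2 + q*(p*k-1-a.2) + q = q*(a.2 + (p*k-1-a.2) + 1) := by ring
        _ = q*(p*k) := by rw [h]
      have e3 : p*(q*k) = p*q*k := by ring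
      have e4 : q*(p*k) = p*q*k := by ring
      rw [Finset.mem_filter, mem_Tset hp hq]
      show (p*(q*k-1-a.1) + q*(p*k-1-a.2) < p*q*k) ∧
        ¬(p*q*k < p*(q*k-1-a.1) + q*(p*k-1-a.2) + p + q)
      omega
    · intro a ha
      rw [Finset.mem_filter, mem_Tset hp hq] at ha
      obtain ⟨hT, hs⟩ := ha
      push_neg at hs
      have e0 : p*(q*k) = p*q*k := by ring
      have hi : a.1 < q*k := lt_of_mul_lt_mul_left (a := p) (by omega) (Nat.zero_le p)
      have e0' : q*(p*k) = p*q*k := by ring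
      have hj : a.2 < p*k := lt_of_mul_lt_mul_left (a := q) (by omega) (Nat.zero_le q)
      have e1 : p*a.1 + p*(q*k-1-a.1) + p = p*(q*k) := by
        have h : a.1 + (q*k-1-a.1) + 1 = q*k := by omega
        calc p*a.1 + p*(q*k-1-a.1) + p = p*(a.1 + (q*k-1-a.1) + 1) := by ring
        _ = p*(q*k) := by rw [h]
      have e2 : q*a.2 + q*(p*k-1-a.2) + q = q*(p*k) := by
        have h : a.2 + (p*k-1-a.2) + 1 = p*k := by omega
        calc q*a.2 + q*(p*k-1-a.2) + q = q*(a.2 + (p*k-1-a.2) + 1) := by ring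
        _ = q*(p*k) := by rw [h]
      rw [Finset.mem_filter, Finset.mem_product, Finset.mem_range, Finset.mem_range]
      show ((q*k-1-a.1 < q*k) ∧ (p*k-1-a.2 < p*k)) ∧
        ¬(p*(q*k-1-a.1) + q*(p*k-1-a.2) < p*q*k)
      omega
    · intro a ha
      rw [Finset.mem_filter, Finset.mem_product, Finset.mem_range, Finset.mem_range] at ha
      obtain ⟨⟨hi, hj⟩, _⟩ := ha
      show (q*k-1-(q*k-1-a.1), p*k-1-(p*k-1-a.2)) = a
      rw [Prod.ext_iff]
      constructor
      · show q*k-1-(q*k-1-a.1) = a.1; omega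
      · show p*k-1-(p*k-1-a.2) = a.2; omega
    · intro a ha
      rw [Finset.mem_filter, mem_Tset hp hq] at ha
      obtain ⟨hT, hs⟩ := ha
      push_neg at hs
      have e0 : p*(q*k) = p*q*k := by ring
      have hi : a.1 < q*k := lt_of_mul_lt_mul_left (a := p) (by omega) (Nat.zero_le p)
      have e0' : q*(p*k) = p*q*k := by ring
      have hj : a.2 < p*k := lt_of_mul_lt_mul_left (a := q) (by omega) (Nat.zero_le q)
      show (q*k-1-(q*k-1-a.1), p*k-1-(p*k-1-a.2)) = a
      rw [Prod.ext_iff]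
      constructor
      · show q*k-1-(q*k-1-a.1) = a.1; omega
      · show p*k-1-(p*k-1-a.2) = a.2; omega
  have acard := Aset_card p q k hp hq hpq
  have e5 : q*k*(p*k) = p*q*k*k := by ring
  omega

-- PART 4: linear algebra over the quotient
section linalg
variable (p q k : ℕ)

def pairToFinsupp (ij : ℕ × ℕ) : Fin 2 →₀ ℕ := Finsupp.single 0 ij.1 + Finsupp.single 1 ij.2

lemma pairToFinsupp_injective : Function.Injective pairToFinsupp := by
  intro a b hab
  have h0 := congrArg (fun d => d 0) hab
  have h1 := congrArg (fun d => d 1) hab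
  simp only [pairToFinsupp, Finsupp.add_apply, Finsupp.single_apply] at h0 h1
  norm_num at h0 h1
  exact Prod.ext h0 h1

def Sfin : Finset (Fin 2 →₀ ℕ) := (Tset p q k).image pairToFinsupp

variable {p q k}

lemma mem_Sfin (hp : 0 < p) (hq : 0 < q) {d : Fin 2 →₀ ℕ} :
    d ∈ Sfin p q k ↔ wt p q d < p * q * k := by
  rw [Sfin, Finset.mem_image]
  constructor
  · rintro ⟨ij, hij, rfl⟩
    rw [mem_Tset hp hq] at hij
    rw [pairToFinsupp, wt_single]
    exact hij
  · intro hd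
    refine ⟨(d 0, d 1), ?_, ?_⟩
    · rw [mem_Tset hp hq]
      exact hd
    · rw [pairToFinsupp]
      exact (finsupp_fin2_eq d).symm

lemma Sfin_card : (Sfin p q k).card = (Tset p q k).card :=
  Finset.card_image_of_injective _ pairToFinsupp_injective

variable (p q k)

/-- evaluation of low-weight coefficients -/
def phiMap : Rps →ₗ[ℂ] ({ d // d ∈ Sfin p q k } → ℂ) where
  toFun F := fun d => MvPowerSeries.coeff (R := ℂ) d.1 F
  map_add' F G := by funext d; simp
  map_smul' c F := by funext d; simp

lemma phiMap_apply (F : Rps) (d : { d // d ∈ Sfin p q k }) :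
    phiMap p q k F d = MvPowerSeries.coeff (R := ℂ) d.1 F := rfl

variable {p q k}

lemma phiMap_surjective : Function.Surjective (phiMap p q k) := by
  intro g
  refine ⟨∑ d ∈ (Sfin p q k).attach, MvPowerSeries.monomial (R := ℂ) d.1 (g d), ?_⟩
  funext e
  rw [phiMap_apply, map_sum, Finset.sum_eq_single e]
  · rw [MvPowerSeries.coeff_monomial_same]
  · intro d _ hde
    exact MvPowerSeries.coeff_monomial_ne (fun h => hde (Subtype.ext h.symm)) _
  · intro h
    exact absurd (Finset.mem_attach _ e) h

lemma ker_phiMap (hp : 0 < p) (hq : 0 < q) :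
    LinearMap.ker (phiMap p q k) = (Jpqn p q k).restrictScalars ℂ := by
  ext F
  rw [LinearMap.mem_ker, Submodule.restrictScalars_mem]
  constructor
  · intro hF
    apply KId_le_Jpqn hp hq
    intro d hd
    have hd' : d ∈ Sfin p q k := (mem_Sfin hp hq).mpr hd
    exact congrFun hF ⟨d, hd'⟩
  · intro hF
    funext d
    have := Jpqn_le_KId p q k hF
    exact this d.1 ((mem_Sfin hp hq).mp d.2)

lemma quot_equiv (hp : 0 < p) (hq : 0 < q) :
    Nonempty ((Rps ⧸ Jpqn p q k) ≃ₗ[ℂ] ({ d // d ∈ Sfin p q k } → ℂ)) := by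
  refine ⟨LinearEquiv.trans (LinearEquiv.trans
    (Submodule.Quotient.restrictScalarsEquiv ℂ ((Jpqn p q k) : Submodule Rps Rps)).symm
    (Submodule.quotEquivOfEq _ _ (ker_phiMap hp hq).symm))
    (LinearMap.quotKerEquivOfSurjective _ phiMap_surjective)⟩

lemma findim_quot (hp : 0 < p) (hq : 0 < q) :
    FiniteDimensional ℂ (Rps ⧸ Jpqn p q k) ∧
      Module.finrank ℂ (Rps ⧸ Jpqn p q k) = (Tset p q k).card := by
  obtain ⟨e⟩ := quot_equiv (p := p) (q := q) (k := k) hp hq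
  have hfin : FiniteDimensional ℂ ({ d // d ∈ Sfin p q k } → ℂ) := by infer_instance
  refine ⟨FiniteDimensional.of_injective (e : (Rps ⧸ Jpqn p q k) →ₗ[ℂ] ({ d // d ∈ Sfin p q k } → ℂ)) e.injective, ?_⟩
  rw [e.finrank_eq, Module.finrank_pi, Fintype.card_coe, Sfin_card]
end linalg

-- PART 5: multiplication by f is injective modulo weight ideals
section leadform
variable {p q : ℕ}

open MvPolynomial in
/-- weight-`c` leading form of a power series, as a polynomial -/
noncomputable def Lpoly (p q c : ℕ) (F : Rps) : MvPolynomial (Fin 2) ℂ :=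
  ∑ d ∈ (Sfin p q (c+1)).filter (fun d => wt p q d = c),
    MvPolynomial.monomial d (MvPowerSeries.coeff (R := ℂ) d F)

lemma mem_Lfilter (hp : 0 < p) (hq : 0 < q) {c : ℕ} {d : Fin 2 →₀ ℕ} :
    d ∈ (Sfin p q (c+1)).filter (fun d => wt p q d = c) ↔ wt p q d = c := by
  rw [Finset.mem_filter, mem_Sfin hp hq]
  constructor
  · tauto
  · intro h
    have h1 : 0 < p * q := Nat.mul_pos hp hq
    have h2 : (c+1) ≤ p * q * (c+1) := Nat.le_mul_of_pos_left _ h1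
    exact ⟨by omega, h⟩

lemma coeff_Lpoly (hp : 0 < p) (hq : 0 < q) (c : ℕ) (F : Rps) (e : Fin 2 →₀ ℕ) :
    MvPolynomial.coeff e (Lpoly p q c F) =
      if wt p q e = c then MvPowerSeries.coeff (R := ℂ) e F else 0 := by
  rw [Lpoly]
  rw [MvPolynomial.coeff_sum]
  by_cases he : wt p q e = c
  · rw [if_pos he, Finset.sum_eq_single e]
    · rw [MvPolynomial.coeff_monomial, if_pos rfl]
    · intro d _ hde
      rw [MvPolynomial.coeff_monomial, if_neg hde]
    · intro h
      exact absurd ((mem_Lfilter hp hq).mpr he) h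
  · rw [if_neg he]
    apply Finset.sum_eq_zero
    intro d hd
    rw [MvPolynomial.coeff_monomial, if_neg]
    intro hde
    exact he (hde ▸ ((mem_Lfilter hp hq).mp hd))

lemma Lpoly_ne_zero (hp : 0 < p) (hq : 0 < q) {c : ℕ} {F : Rps} {d : Fin 2 →₀ ℕ}
    (hd : wt p q d = c) (hF : MvPowerSeries.coeff (R := ℂ) d F ≠ 0) : Lpoly p q c F ≠ 0 := by
  intro h0
  apply hF
  have := congrArg (MvPolynomial.coeff d) h0
  rw [coeff_Lpoly hp hq, if_pos hd] at this
  simpa using this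

/-- key cancellation: if `f` has weighted order `ν` and `f*g` lies in the weight-`(ν+M')`
coideal, then `g` lies in the weight-`M'` coideal. -/
lemma cancel_f (hp : 0 < p) (hq : 0 < q) {f g : Rps} {ν M' : ℕ}
    (hord₁ : ∀ d, wt p q d < ν → MvPowerSeries.coeff (R := ℂ) d f = 0)
    (hord₂ : ∃ d, wt p q d = ν ∧ MvPowerSeries.coeff (R := ℂ) d f ≠ 0)
    (hfg : ∀ d, wt p q d < ν + M' → MvPowerSeries.coeff (R := ℂ) d (f * g) = 0) :
    ∀ d, wt p q d < M' → MvPowerSeries.coeff (R := ℂ) d g = 0 := by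
  by_contra hcon
  push_neg at hcon
  obtain ⟨d₀, hd₀w, hd₀⟩ := hcon
  have hP : ∃ u, ∃ d, wt p q d = u ∧ MvPowerSeries.coeff (R := ℂ) d g ≠ 0 :=
    ⟨wt p q d₀, d₀, rfl, hd₀⟩
  classical
  set μ := Nat.find hP with hμdef
  obtain ⟨dμ, hdμw, hdμ⟩ := Nat.find_spec hP
  have hμle : μ ≤ wt p q d₀ := Nat.find_min' hP ⟨d₀, rfl, hd₀⟩
  have hμM : μ < M' := by omega
  have hgmin : ∀ d, wt p q d < μ → MvPowerSeries.coeff (R := ℂ) d g = 0 := by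
    intro d hd
    by_contra hne
    exact absurd ⟨d, rfl, hne⟩ (Nat.find_min hP hd)
  obtain ⟨dν, hdνw, hdν⟩ := hord₂
  have hLf : Lpoly p q ν f ≠ 0 := Lpoly_ne_zero hp hq hdνw hdν
  have hLg : Lpoly p q μ g ≠ 0 := Lpoly_ne_zero hp hq hdμw hdμ
  have hprod : Lpoly p q ν f * Lpoly p q μ g ≠ 0 := mul_ne_zero hLf hLg
  obtain ⟨d, hd⟩ := MvPolynomial.ne_zero_iff.mp hprod
  have hdwt : wt p q d = ν + μ := by
    by_contra hne
    apply hd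
    rw [MvPolynomial.coeff_mul]
    apply Finset.sum_eq_zero
    intro ab hab
    rw [Finset.HasAntidiagonal.mem_antidiagonal] at hab
    rw [coeff_Lpoly hp hq, coeff_Lpoly hp hq]
    by_cases h1 : wt p q ab.1 = ν
    · by_cases h2 : wt p q ab.2 = μ
      · exact absurd (by rw [← hab, wt_add, h1, h2]) hne
      · rw [if_neg h2, mul_zero]
    · rw [if_neg h1, zero_mul]
  have heq : MvPowerSeries.coeff (R := ℂ) d (f * g) =
      MvPolynomial.coeff d (Lpoly p q ν f * Lpoly p q μ g) := by
    rw [MvPowerSeries.coeff_mul, MvPolynomial.coeff_mul]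
    apply Finset.sum_congr rfl
    intro ab hab
    rw [Finset.HasAntidiagonal.mem_antidiagonal] at hab
    have habw : wt p q ab.1 + wt p q ab.2 = ν + μ := by rw [← wt_add, hab, hdwt]
    rw [coeff_Lpoly hp hq, coeff_Lpoly hp hq]
    rcases lt_trichotomy (wt p q ab.1) ν with h | h | h
    · rw [hord₁ ab.1 h, if_neg (by omega), zero_mul, zero_mul]
    · have h2 : wt p q ab.2 = μ := by omega
      rw [if_pos h, if_pos h2]
    · have h2 : wt p q ab.2 < μ := by omega
      rw [hgmin ab.2 h2]; simp
  apply hd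
  rw [← heq]
  exact hfg d (by omega)
end leadform

end

set_option maxHeartbeats 4000000 in
set_option synthInstance.maxHeartbeats 1000000 in
/-- Lemma 4.11 (formal version): if `f ∈ ℂ⟦x,y⟧` is nonzero with `(p,q)`-weighted order `ν`
divisible by `p·q`, then for every `n ≥ ν/(p·q)`,
`dim_ℂ ℂ⟦x,y⟧/(J_{p,q,n} + ⟨f⟩) = n·ν − ν(ν−p−q+1)/(2pq)`, i.e.
`2pq · dim = 2pq·n·ν − ν·(ν−p−q+1)`. -/
theorem dim_quotient_Jpqn_add_f (p q : ℕ) (hp : 0 < p) (hq : 0 < q) (hpq : Nat.Coprime p q)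
    (f : MvPowerSeries (Fin 2) ℂ) (hf0 : f ≠ 0) (ν : ℕ)
    (hord₁ : ∀ i j : ℕ, p * i + q * j < ν →
      MvPowerSeries.coeff (R := ℂ) (Finsupp.single (0 : Fin 2) i + Finsupp.single 1 j) f = 0)
    (hord₂ : ∃ i j : ℕ, p * i + q * j = ν ∧
      MvPowerSeries.coeff (R := ℂ) (Finsupp.single (0 : Fin 2) i + Finsupp.single 1 j) f ≠ 0)
    (hdvd : p * q ∣ ν) (n : ℕ) (hn : ν ≤ p * q * n) :
    FiniteDimensional ℂ (MvPowerSeries (Fin 2) ℂ ⧸ (Jpqn p q n ⊔ Ideal.span {f})) ∧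
    (2 * p * q *
        Module.finrank ℂ (MvPowerSeries (Fin 2) ℂ ⧸ (Jpqn p q n ⊔ Ideal.span {f})) : ℤ) =
      2 * p * q * n * ν - (ν : ℤ) * ((ν : ℤ) - p - q + 1) := by
  classical
  obtain ⟨m, hm⟩ := hdvd
  have hpq0 : 0 < p * q := Nat.mul_pos hp hq
  have hmn : m ≤ n := by
    by_contra hcon
    push_neg at hcon
    have : p * q * n < p * q * m := (Nat.mul_lt_mul_left hpq0).mpr hcon
    omega
  have hsplit : p * q * n = ν + p * q * (n - m) := by
    have h2 : (n - m) + m = n := by omega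
    have h1 : p*q*(n-m) + p*q*m = p*q*n := by
      calc p*q*(n-m) + p*q*m = p*q*((n-m) + m) := by ring
      _ = p*q*n := by rw [h2]
    omega
  have hordw₁ : ∀ d, wt p q d < ν → MvPowerSeries.coeff (R := ℂ) d f = 0 := by
    intro d hd
    have := hord₁ (d 0) (d 1) hd
    rwa [← finsupp_fin2_eq d] at this
  have hordw₂ : ∃ d, wt p q d = ν ∧ MvPowerSeries.coeff (R := ℂ) d f ≠ 0 := by
    obtain ⟨i, j, hij, hc⟩ := hord₂
    exact ⟨Finsupp.single 0 i + Finsupp.single 1 j, by rw [wt_single]; exact hij, hc⟩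
  -- multiplication by f, from Rps to Rps ⧸ Jpqn p q n
  set J : Ideal Rps := Jpqn p q n with hJ
  set J' : Ideal Rps := Jpqn p q (n - m) with hJ'
  let mulf : Rps →ₗ[ℂ] Rps ⧸ J :=
    ((Ideal.Quotient.mkₐ ℂ J).toLinearMap).comp (LinearMap.mulLeft ℂ f)
  have mulf_apply : ∀ g : Rps, mulf g = Ideal.Quotient.mk J (f * g) := fun g => rfl
  have hle : J'.restrictScalars ℂ ≤ LinearMap.ker mulf := by
    intro g hg
    rw [LinearMap.mem_ker, mulf_apply, Ideal.Quotient.eq_zero_iff_mem]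
    apply KId_le_Jpqn hp hq
    intro d hd
    rw [MvPowerSeries.coeff_mul]
    apply Finset.sum_eq_zero
    intro ab hab
    rw [Finset.HasAntidiagonal.mem_antidiagonal] at hab
    have habw : wt p q ab.1 + wt p q ab.2 = wt p q d := by rw [← wt_add, hab]
    by_cases h1 : wt p q ab.1 < ν
    · rw [hordw₁ ab.1 h1, zero_mul]
    · have h2 : wt p q ab.2 < p * q * (n - m) := by omega
      rw [Jpqn_le_KId p q (n-m) hg ab.2 h2, mul_zero]
  have hker : LinearMap.ker mulf ≤ J'.restrictScalars ℂ := by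
    intro g hg
    rw [LinearMap.mem_ker, mulf_apply, Ideal.Quotient.eq_zero_iff_mem] at hg
    show g ∈ J'
    apply KId_le_Jpqn hp hq
    apply cancel_f hp hq hordw₁ hordw₂
    intro d hd
    exact Jpqn_le_KId p q n hg d (by omega)
  let ψ : (Rps ⧸ J'.restrictScalars ℂ) →ₗ[ℂ] Rps ⧸ J :=
    Submodule.liftQ (J'.restrictScalars ℂ) mulf hle
  have hψinj : Function.Injective ψ := by
    rw [← LinearMap.ker_eq_bot]
    exact Submodule.ker_liftQ_eq_bot _ _ _ hker
  have hψrange : LinearMap.range ψ =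
      (Ideal.map (Ideal.Quotient.mk J) (Ideal.span {f})).restrictScalars ℂ := by
    rw [Submodule.range_liftQ]
    ext x
    rw [LinearMap.mem_range, Submodule.restrictScalars_mem, Ideal.map_span,
      Set.image_singleton]
    constructor
    · rintro ⟨g, rfl⟩
      rw [mulf_apply, Ideal.mem_span_singleton']
      exact ⟨Ideal.Quotient.mk J g, by rw [← map_mul, mul_comm]⟩
    · intro hx
      rw [Ideal.mem_span_singleton'] at hx
      obtain ⟨b, hb⟩ := hx
      obtain ⟨g, rfl⟩ := Ideal.Quotient.mk_surjective b
      exact ⟨g, by rw [mulf_apply, ← hb, ← map_mul, mul_comm]⟩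
  -- dimension of Rps ⧸ J and Rps ⧸ J'
  obtain ⟨hfinJ, hrkJ⟩ := findim_quot (p := p) (q := q) (k := n) hp hq
  obtain ⟨hfinJ', hrkJ'⟩ := findim_quot (p := p) (q := q) (k := n - m) hp hq
  -- the ideal K in the quotient
  set K : Ideal (Rps ⧸ J) := Ideal.map (Ideal.Quotient.mk J) (Ideal.span {f}) with hK
  have hrkK : Module.finrank ℂ (K.restrictScalars ℂ) = (Tset p q (n-m)).card := by
    rw [← hψrange, LinearMap.finrank_range_of_inj hψinj]
    rw [(Submodule.Quotient.restrictScalarsEquiv ℂ (J' : Submodule Rps Rps)).finrank_eq]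
    exact hrkJ'
  -- the target quotient is isomorphic to (Rps ⧸ J) ⧸ K
  have hmapeq : Ideal.map (Ideal.Quotient.mkₐ ℂ J) (Ideal.span {f}) = K := rfl
  let e1 : ((Rps ⧸ J) ⧸ K) ≃ₐ[ℂ] Rps ⧸ (J ⊔ Ideal.span {f}) := by
    rw [← hmapeq]
    exact DoubleQuot.quotQuotEquivQuotSupₐ ℂ J (Ideal.span {f})
  let e2 : ((Rps ⧸ J) ⧸ K.restrictScalars ℂ) ≃ₗ[ℂ] ((Rps ⧸ J) ⧸ K) :=
    Submodule.Quotient.restrictScalarsEquiv ℂ (K : Submodule (Rps ⧸ J) (Rps ⧸ J))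
  have hfinQ : FiniteDimensional ℂ ((Rps ⧸ J) ⧸ K.restrictScalars ℂ) := by
    infer_instance
  have hfinTarget : FiniteDimensional ℂ (Rps ⧸ (J ⊔ Ideal.span {f})) :=
    Module.Finite.equiv (e2.trans e1.toLinearEquiv)
  refine ⟨hfinTarget, ?_⟩
  have hrkTarget : Module.finrank ℂ (Rps ⧸ (J ⊔ Ideal.span {f}))
      = Module.finrank ℂ ((Rps ⧸ J) ⧸ K.restrictScalars ℂ) :=
    ((e2.trans e1.toLinearEquiv).symm.finrank_eq).symm.symm ▸
      ((e2.trans e1.toLinearEquiv).finrank_eq).symm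
  have hquot := Submodule.finrank_quotient_add_finrank (K.restrictScalars ℂ)
  -- numerics
  have c1 := Tset_card p q n hp hq hpq
  have c2 := Tset_card p q (n - m) hp hq hpq
  have hfr : Module.finrank ℂ (Rps ⧸ (J ⊔ Ideal.span {f})) + (Tset p q (n-m)).card
      = (Tset p q n).card := by
    rw [hrkTarget, ← hrkK, ← hrkJ, hquot]
  -- now pure integer arithmetic
  have hνz : (ν : ℤ) = (p : ℤ) * q * m := by exact_mod_cast hm
  have c1z : 2 * ((Tset p q n).card : ℤ) + n = (p:ℤ)*q*n*n + ((p:ℤ)+q)*n := by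
    exact_mod_cast c1
  have c2z : 2 * ((Tset p q (n-m)).card : ℤ) + ((n:ℤ) - m)
      = (p:ℤ)*q*((n:ℤ)-m)*((n:ℤ)-m) + ((p:ℤ)+q)*((n:ℤ)-m) := by
    have : ((n - m : ℕ) : ℤ) = (n:ℤ) - m := by
      rw [Nat.cast_sub hmn]
    rw [← this]
    exact_mod_cast c2
  have hfrz : (Module.finrank ℂ (Rps ⧸ (J ⊔ Ideal.span {f})) : ℤ)
      + ((Tset p q (n-m)).card : ℤ) = ((Tset p q n).card : ℤ) := by exact_mod_cast hfr
  rw [hνz]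
  linear_combination ((p:ℤ)*q) * c1z - ((p:ℤ)*q) * c2z + (2*(p:ℤ)*q) * hfrz
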